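/- Let α ∈ (−1,1), κ := √(1−α²), and for σ > 0 define ψ_σ(x) = (σ/π)^{1/4} e^{−σx²/2}. Let p_∞(x,y) := e^{−x²/2 − αxy − y²/2}, set ν_∞ := √(2π/(1+κ)), and define the integral operator P̂_∞ on L²(ℝ) by P̂_∞[φ](x) := ν_∞^{−1} ∫_ℝ p_∞(x,y) φ(y) dy. Then: (i) P̂_∞[ψ_κ] = ψ_κ; and (ii) there exists μ < 1 such that for every φ ∈ L²(ℝ) with ⟨ψ_κ, φ⟩_{L²(ℝ)} = 0, one has ‖P̂_∞[φ]‖_{L²(ℝ)} ≤ μ ‖φ‖_{L²(ℝ)}. -/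

import Mathlib

set_option maxHeartbeats 1000000
open MeasureTheory Real
open scoped ENNReal

/-- The normalized Gaussian `ψ_σ(x) = (σ/π)^{1/4} e^{-σ x²/2}`. -/
noncomputable def psi (σ : ℝ) (x : ℝ) : ℝ :=
  (σ / Real.pi) ^ ((1 : ℝ) / 4) * Real.exp (-σ * x ^ 2 / 2)

/-- The kernel `p_∞(x,y) = e^{-x²/2 - αxy - y²/2}`. -/
noncomputable def pInf (α : ℝ) (x y : ℝ) : ℝ :=
  Real.exp (-x ^ 2 / 2 - α * x * y - y ^ 2 / 2)

/-- The normalized Gaussian transfer operator `P̂_∞`. -/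
noncomputable def Phat (α : ℝ) (φ : ℝ → ℝ) (x : ℝ) : ℝ :=
  (Real.sqrt (2 * Real.pi / (1 + Real.sqrt (1 - α ^ 2))))⁻¹ * ∫ y : ℝ, pInf α x y * φ y

noncomputable def Kk (κ s x y : ℝ) : ℝ :=
  Real.sqrt (κ / (Real.pi * (1 - s ^ 2))) *
    Real.exp (-(κ * ((1 + s ^ 2) * (x ^ 2 + y ^ 2) - 4 * s * x * y)) / (2 * (1 - s ^ 2)))

lemma integrable_exp_quad (b c : ℝ) (hb : 0 < b) :
    Integrable (fun y : ℝ => Real.exp (-b * y ^ 2 + c * y)) := by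
  have h : ∀ y : ℝ, -b * y ^ 2 + c * y = -(b * (y - c / (2 * b)) ^ 2) + c ^ 2 / (4 * b) := by
    intro y; field_simp; ring
  simp_rw [h, Real.exp_add]
  exact (((integrable_exp_neg_mul_sq hb).comp_sub_right (c / (2 * b))).mul_const _).congr
    (by filter_upwards with y; rw [neg_mul])

lemma integral_exp_quad (b c : ℝ) (hb : 0 < b) :
    ∫ y : ℝ, Real.exp (-b * y ^ 2 + c * y)
      = Real.sqrt (Real.pi / b) * Real.exp (c ^ 2 / (4 * b)) := by
  have h : ∀ y : ℝ, -b * y ^ 2 + c * y = -(b * (y - c / (2 * b)) ^ 2) + c ^ 2 / (4 * b) := by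
    intro y; field_simp; ring
  simp_rw [h, Real.exp_add]
  rw [integral_mul_const]
  congr 1
  rw [integral_sub_right_eq_self (fun y : ℝ => Real.exp (-(b * y ^ 2))) (c / (2 * b))]
  simpa [neg_mul] using integral_gaussian b

lemma integral_Kk_mul_Kk {κ s u : ℝ} (hκ : 0 < κ) (hs : s ^ 2 < 1) (hu : u ^ 2 < 1) (x z : ℝ) :
    ∫ y : ℝ, Kk κ s x y * Kk κ u y z = Kk κ (s * u) x z := by
  have h1 : (0:ℝ) < 1 - s ^ 2 := by linarith
  have h2 : (0:ℝ) < 1 - u ^ 2 := by linarith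
  have hsu : (0:ℝ) < 1 - (s * u) ^ 2 := by nlinarith [sq_nonneg s, sq_nonneg u]
  have h1' : (1:ℝ) - s ^ 2 ≠ 0 := ne_of_gt h1
  have h2' : (1:ℝ) - u ^ 2 ≠ 0 := ne_of_gt h2
  have hsu' : (1:ℝ) - (s * u) ^ 2 ≠ 0 := ne_of_gt hsu
  have hnum : κ * (1 - s ^ 2 * u ^ 2) ≠ 0 := by nlinarith [sq_nonneg (s*u)]
  obtain ⟨B, hB⟩ : ∃ B : ℝ, B = κ * (1 - s ^ 2 * u ^ 2) / ((1 - s ^ 2) * (1 - u ^ 2)) := ⟨_, rfl⟩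
  have hBpos : 0 < B := by
    rw [hB]
    apply div_pos
    · nlinarith [sq_nonneg (s*u)]
    · positivity
  obtain ⟨C, hC⟩ : ∃ C : ℝ, C = 2 * κ * s * x / (1 - s ^ 2) + 2 * κ * u * z / (1 - u ^ 2) :=
    ⟨_, rfl⟩
  obtain ⟨c1, hc1⟩ : ∃ c : ℝ, c = Real.sqrt (κ / (Real.pi * (1 - s ^ 2))) := ⟨_, rfl⟩
  obtain ⟨c2, hc2⟩ : ∃ c : ℝ, c = Real.sqrt (κ / (Real.pi * (1 - u ^ 2))) := ⟨_, rfl⟩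
  obtain ⟨E, hE⟩ : ∃ E : ℝ, E = -(κ * (1 + s ^ 2) * x ^ 2) / (2 * (1 - s ^ 2))
      + -(κ * (1 + u ^ 2) * z ^ 2) / (2 * (1 - u ^ 2)) := ⟨_, rfl⟩
  have hrw : ∀ y : ℝ,
      Kk κ s x y * Kk κ u y z = (c1 * c2 * Real.exp E) * Real.exp (-B * y ^ 2 + C * y) := by
    intro y
    have harg : (-(κ * ((1 + s ^ 2) * (x ^ 2 + y ^ 2) - 4 * s * x * y)) / (2 * (1 - s ^ 2)))
        + (-(κ * ((1 + u ^ 2) * (y ^ 2 + z ^ 2) - 4 * u * y * z)) / (2 * (1 - u ^ 2)))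
        = E + (-B * y ^ 2 + C * y) := by
      rw [hE, hB, hC]; field_simp
      ring
    calc Kk κ s x y * Kk κ u y z
        = c1 * c2 * Real.exp ((-(κ * ((1 + s ^ 2) * (x ^ 2 + y ^ 2) - 4 * s * x * y))
              / (2 * (1 - s ^ 2)))
            + (-(κ * ((1 + u ^ 2) * (y ^ 2 + z ^ 2) - 4 * u * y * z)) / (2 * (1 - u ^ 2)))) := by
          unfold Kk; rw [hc1, hc2, Real.exp_add]; ring
      _ = (c1 * c2 * Real.exp E) * Real.exp (-B * y ^ 2 + C * y) := by
          rw [harg, Real.exp_add]; ring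
  simp_rw [hrw]
  rw [integral_const_mul, integral_exp_quad _ _ hBpos]
  have hsq : c1 * c2 * Real.sqrt (Real.pi / B)
      = Real.sqrt (κ / (Real.pi * (1 - (s * u) ^ 2))) := by
    rw [hc1, hc2, ← Real.sqrt_mul (by positivity), ← Real.sqrt_mul (by positivity)]
    congr 1
    rw [hB]
    field_simp
  have hexp : E + C ^ 2 / (4 * B)
      = -(κ * ((1 + (s * u) ^ 2) * (x ^ 2 + z ^ 2) - 4 * (s * u) * x * z))
          / (2 * (1 - (s * u) ^ 2)) := by
    rw [hE, hC, hB]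
    have hsu2 : (1:ℝ) - s ^ 2 * u ^ 2 ≠ 0 := by rw [← mul_pow]; exact hsu'
    field_simp
    ring
  calc (c1 * c2 * Real.exp E) * (Real.sqrt (Real.pi / B) * Real.exp (C ^ 2 / (4 * B)))
      = (c1 * c2 * Real.sqrt (Real.pi / B)) * Real.exp (E + C ^ 2 / (4 * B)) := by
        rw [Real.exp_add]; ring
    _ = Kk κ (s * u) x z := by rw [hsq, hexp]; rfl

lemma integral_Kk_diag {κ u : ℝ} (hκ : 0 < κ) (hu : u ^ 2 < 1) :
    ∫ x : ℝ, Kk κ u x x = 1 / (1 - u) := by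
  have h2 : (0:ℝ) < 1 - u ^ 2 := by linarith
  have hul : -1 < u := by nlinarith
  have hur : u < 1 := by nlinarith
  have ha : (0:ℝ) < κ * (1 - u) / (1 + u) := by
    apply div_pos; nlinarith; linarith
  have hu1 : (1:ℝ) + u ≠ 0 := by linarith
  have hu2 : (1:ℝ) - u ≠ 0 := by linarith
  have h2' : (1:ℝ) - u ^ 2 ≠ 0 := ne_of_gt h2
  have hrw : ∀ x : ℝ, Kk κ u x x
      = Real.sqrt (κ / (Real.pi * (1 - u ^ 2))) * Real.exp (-(κ * (1 - u) / (1 + u)) * x ^ 2) := by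
    intro x
    unfold Kk
    congr 2
    have : (1:ℝ) - u ^ 2 = (1 - u) * (1 + u) := by ring
    field_simp [this]
    ring
  simp_rw [hrw]
  rw [integral_const_mul, integral_gaussian, ← Real.sqrt_mul (by positivity)]
  rw [show κ / (Real.pi * (1 - u ^ 2)) * (Real.pi / (κ * (1 - u) / (1 + u)))
      = (1 / (1 - u)) ^ 2 by
    have : (1:ℝ) - u ^ 2 = (1 - u) * (1 + u) := by ring
    field_simp [this]
    ring]
  exact Real.sqrt_sq (le_of_lt (div_pos one_pos (by linarith)))

lemma integral_psi_sq {κ : ℝ} (hκ : 0 < κ) : ∫ x : ℝ, psi κ x ^ 2 = 1 := by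
  have h14 : ((κ / Real.pi) ^ ((1:ℝ)/4)) ^ (2:ℕ) = Real.sqrt (κ / Real.pi) := by
    rw [Real.sqrt_eq_rpow, ← Real.rpow_natCast ((κ / Real.pi) ^ ((1:ℝ)/4)) 2,
      ← Real.rpow_mul (by positivity)]
    norm_num
  have hrw : ∀ x : ℝ, psi κ x ^ 2 = Real.sqrt (κ / Real.pi) * Real.exp (-κ * x ^ 2) := by
    intro x
    unfold psi
    rw [mul_pow, h14, sq (Real.exp _), ← Real.exp_add]
    congr 1
    ring
  simp_rw [hrw]
  rw [integral_const_mul, integral_gaussian, ← Real.sqrt_mul (by positivity),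
    show κ / Real.pi * (Real.pi / κ) = 1 by field_simp]
  exact Real.sqrt_one

lemma integral_Kk_psi {κ s : ℝ} (hκ : 0 < κ) (hs : s ^ 2 < 1) (x : ℝ) :
    ∫ y : ℝ, Kk κ s x y * psi κ y = psi κ x := by
  have h1 : (0:ℝ) < 1 - s ^ 2 := by linarith
  set B := κ / (1 - s ^ 2) with hB
  have hBpos : 0 < B := div_pos hκ h1
  set C := 2 * κ * s * x / (1 - s ^ 2) with hC
  set c1 := Real.sqrt (κ / (Real.pi * (1 - s ^ 2))) with hc1
  set c2 := (κ / Real.pi) ^ ((1:ℝ)/4) with hc2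
  set E := -(κ * (1 + s ^ 2) * x ^ 2) / (2 * (1 - s ^ 2)) with hE
  have hrw : ∀ y : ℝ, Kk κ s x y * psi κ y = (c1 * c2 * Real.exp E) * Real.exp (-B * y ^ 2 + C * y) := by
    intro y
    have harg : (-(κ * ((1 + s ^ 2) * (x ^ 2 + y ^ 2) - 4 * s * x * y)) / (2 * (1 - s ^ 2)))
        + (-κ * y ^ 2 / 2) = E + (-B * y ^ 2 + C * y) := by
      rw [hE, hB, hC]; field_simp; ring
    calc Kk κ s x y * psi κ y
        = c1 * c2 * Real.exp ((-(κ * ((1 + s ^ 2) * (x ^ 2 + y ^ 2) - 4 * s * x * y))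
            / (2 * (1 - s ^ 2))) + (-κ * y ^ 2 / 2)) := by
          unfold Kk psi; rw [Real.exp_add]; ring
      _ = (c1 * c2 * Real.exp E) * Real.exp (-B * y ^ 2 + C * y) := by
          rw [harg, Real.exp_add]; ring
  simp_rw [hrw]
  rw [integral_const_mul, integral_exp_quad _ _ hBpos]
  have hsq : c1 * Real.sqrt (Real.pi / B) = 1 := by
    rw [hc1, ← Real.sqrt_mul (by positivity)]
    rw [show κ / (Real.pi * (1 - s ^ 2)) * (Real.pi / B) = 1 by
      rw [hB]; field_simp]
    exact Real.sqrt_one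
  have hexp : E + C ^ 2 / (4 * B) = -κ * x ^ 2 / 2 := by
    rw [hE, hC, hB]; field_simp; ring
  calc (c1 * c2 * Real.exp E) * (Real.sqrt (Real.pi / B) * Real.exp (C ^ 2 / (4 * B)))
      = (c1 * Real.sqrt (Real.pi / B)) * (c2 * Real.exp (E + C ^ 2 / (4 * B))) := by
        rw [Real.exp_add]; ring
    _ = psi κ x := by rw [hsq, hexp, one_mul]; rfl

section bridge
variable {α κ : ℝ}

lemma kappa_pos (hα : α ∈ Set.Ioo (-1:ℝ) 1) (hκ : κ = Real.sqrt (1 - α ^ 2)) : 0 < κ := by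
  obtain ⟨h1, h2⟩ := hα
  rw [hκ]
  apply Real.sqrt_pos.mpr
  nlinarith

lemma kappa_sq (hα : α ∈ Set.Ioo (-1:ℝ) 1) (hκ : κ = Real.sqrt (1 - α ^ 2)) :
    κ ^ 2 = 1 - α ^ 2 := by
  obtain ⟨h1, h2⟩ := hα
  rw [hκ]
  exact Real.sq_sqrt (by nlinarith)

lemma t_sq_lt_one (hα : α ∈ Set.Ioo (-1:ℝ) 1) (hκ : κ = Real.sqrt (1 - α ^ 2)) :
    (-α / (1 + κ)) ^ 2 < 1 := by
  have hκpos := kappa_pos hα hκ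
  have hκ2 := kappa_sq hα hκ
  obtain ⟨h1, h2⟩ := hα
  rw [div_pow]
  rw [div_lt_one (by positivity)]
  nlinarith

lemma one_sub_t_sq (hα : α ∈ Set.Ioo (-1:ℝ) 1) (hκ : κ = Real.sqrt (1 - α ^ 2)) :
    1 - (-α / (1 + κ)) ^ 2 = 2 * κ / (1 + κ) := by
  have hκpos := kappa_pos hα hκ
  have hκ2 := kappa_sq hα hκ
  have hne : (1:ℝ) + κ ≠ 0 := by positivity
  field_simp
  linear_combination (-1:ℝ) * hκ2

lemma one_add_t_sq (hα : α ∈ Set.Ioo (-1:ℝ) 1) (hκ : κ = Real.sqrt (1 - α ^ 2)) :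
    1 + (-α / (1 + κ)) ^ 2 = 2 / (1 + κ) := by
  have hκpos := kappa_pos hα hκ
  have hκ2 := kappa_sq hα hκ
  have hne : (1:ℝ) + κ ≠ 0 := by positivity
  field_simp
  linear_combination hκ2

lemma Kk_eq_pinf (hα : α ∈ Set.Ioo (-1:ℝ) 1) (hκ : κ = Real.sqrt (1 - α ^ 2)) (x y : ℝ) :
    Kk κ (-α / (1 + κ)) x y
      = (Real.sqrt (2 * Real.pi / (1 + Real.sqrt (1 - α ^ 2))))⁻¹ * pInf α x y := by
  have hκpos := kappa_pos hα hκ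
  have hκ2 := kappa_sq hα hκ
  have hne : (1:ℝ) + κ ≠ 0 := by positivity
  unfold Kk pInf
  rw [← hκ]
  congr 1
  · rw [← Real.sqrt_inv, one_sub_t_sq hα hκ]
    congr 1
    field_simp
  · rw [one_add_t_sq hα hκ, one_sub_t_sq hα hκ]
    field_simp
    ring

lemma Phat_eq_Q (hα : α ∈ Set.Ioo (-1:ℝ) 1) (hκ : κ = Real.sqrt (1 - α ^ 2)) (φ : ℝ → ℝ)
    (x : ℝ) : Phat α φ x = ∫ y : ℝ, Kk κ (-α / (1 + κ)) x y * φ y := by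
  unfold Phat
  simp_rw [Kk_eq_pinf hα hκ, mul_assoc]
  rw [integral_const_mul]

end bridge

noncomputable def lam (κ s : ℝ) : ℝ := κ * (1 - |s|) ^ 2 / (2 * (1 - s ^ 2))

lemma lam_pos {κ s : ℝ} (hκ : 0 < κ) (hs : s ^ 2 < 1) : 0 < lam κ s := by
  have habs : |s| < 1 := (sq_lt_one_iff_abs_lt_one s).mp hs
  have h1 : (0:ℝ) < 1 - s ^ 2 := by linarith
  have h2 : (0:ℝ) < 1 - |s| := by linarith
  unfold lam
  positivity

lemma Kk_nonneg (κ s x y : ℝ) : 0 ≤ Kk κ s x y := by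
  unfold Kk; positivity

lemma continuous_Kk (κ s : ℝ) : Continuous fun p : ℝ × ℝ => Kk κ s p.1 p.2 := by
  unfold Kk
  fun_prop

lemma Kk_le {κ s : ℝ} (hκ : 0 < κ) (hs : s ^ 2 < 1) (x y : ℝ) :
    Kk κ s x y ≤ Real.sqrt (κ / (Real.pi * (1 - s ^ 2))) *
      (Real.exp (-lam κ s * x ^ 2) * Real.exp (-lam κ s * y ^ 2)) := by
  have habs : |s| < 1 := (sq_lt_one_iff_abs_lt_one s).mp hs
  have h1 : (0:ℝ) < 1 - s ^ 2 := by linarith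
  unfold Kk
  apply mul_le_mul_of_nonneg_left _ (Real.sqrt_nonneg _)
  rw [← Real.exp_add]
  apply Real.exp_le_exp.mpr
  have harr : -lam κ s * x ^ 2 + -lam κ s * y ^ 2
      = -(κ * ((1 - |s|) ^ 2 * (x ^ 2 + y ^ 2))) / (2 * (1 - s ^ 2)) := by
    unfold lam; field_simp; ring
  rw [harr, div_le_div_iff_of_pos_right (by linarith : (0:ℝ) < 2 * (1 - s ^ 2)), neg_le_neg_iff]
  have h2 : s * (x * y) ≤ |s| * (|x| * |y|) := by
    rw [← abs_mul, ← abs_mul]; exact le_abs_self _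
  have h3 : 2 * (|x| * |y|) ≤ x ^ 2 + y ^ 2 := by
    nlinarith [sq_nonneg (|x| - |y|), sq_abs x, sq_abs y]
  have key : (1 - |s|) ^ 2 * (x ^ 2 + y ^ 2) ≤ (1 + s ^ 2) * (x ^ 2 + y ^ 2) - 4 * s * x * y := by
    nlinarith [h2, h3, sq_abs s, mul_le_mul_of_nonneg_left h3 (abs_nonneg s)]
  calc κ * ((1 - |s|) ^ 2 * (x ^ 2 + y ^ 2)) ≤ κ * ((1 + s ^ 2) * (x ^ 2 + y ^ 2) - 4 * s * x * y) :=
        mul_le_mul_of_nonneg_left key hκ.le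
    _ = κ * ((1 + s ^ 2) * (x ^ 2 + y ^ 2) - 4 * s * x * y) := rfl

lemma memLp_gauss (c a : ℝ) (ha : 0 < a) :
    MemLp (fun x : ℝ => c * Real.exp (-a * x ^ 2)) 2 volume := by
  have hcont : Continuous fun x : ℝ => c * Real.exp (-a * x ^ 2) := by fun_prop
  refine (memLp_two_iff_integrable_sq hcont.aestronglyMeasurable).mpr ?_
  have : Integrable (fun x : ℝ => c ^ 2 * Real.exp (-(2 * a) * x ^ 2)) :=
    (integrable_exp_neg_mul_sq (by linarith)).const_mul _
  apply this.congr
  filter_upwards with x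
  rw [mul_pow, sq (Real.exp _), ← Real.exp_add]
  congr 1
  ring

lemma memLp_psi {κ : ℝ} (hκ : 0 < κ) : MemLp (psi κ) 2 volume := by
  have hfun : psi κ = fun x => (κ / Real.pi) ^ ((1:ℝ)/4) * Real.exp (-(κ/2) * x ^ 2) := by
    funext x; unfold psi; congr 1; ring
  rw [hfun]
  exact memLp_gauss _ _ (by linarith)

lemma memLp_Kk_right {κ s : ℝ} (hκ : 0 < κ) (hs : s ^ 2 < 1) (x : ℝ) :
    MemLp (fun y => Kk κ s x y) 2 volume := by
  have hbound := memLp_gauss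
    (Real.sqrt (κ / (Real.pi * (1 - s ^ 2))) * Real.exp (-lam κ s * x ^ 2)) (lam κ s)
    (lam_pos hκ hs)
  refine MemLp.of_le hbound
    ((continuous_Kk κ s).comp (Continuous.prodMk_right x)).aestronglyMeasurable ?_
  filter_upwards with y
  rw [Real.norm_eq_abs, Real.norm_eq_abs, abs_of_nonneg (Kk_nonneg _ _ _ _),
    abs_of_nonneg (by positivity)]
  exact le_trans (Kk_le hκ hs x y) (le_of_eq (by ring))

lemma integrable_mul_L2 {f g : ℝ → ℝ} (hf : MemLp f 2 volume) (hg : MemLp g 2 volume) :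
    Integrable (fun x => f x * g x) := by
  refine Integrable.mono' ((hf.integrable_sq.add hg.integrable_sq).div_const 2)
    (hf.1.mul hg.1) ?_
  filter_upwards with x
  simp only [Pi.add_apply]
  rw [Real.norm_eq_abs, abs_mul]
  nlinarith [sq_nonneg (|f x| - |g x|), sq_abs (f x), sq_abs (g x), abs_nonneg (f x),
    abs_nonneg (g x)]

lemma abs_integral_mul_le {f g : ℝ → ℝ} (hf : MemLp f 2 volume) (hg : MemLp g 2 volume) :
    |∫ x, f x * g x| ≤ Real.sqrt (∫ x, f x ^ 2) * Real.sqrt (∫ x, g x ^ 2) := by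
  have h2 : ENNReal.ofReal (2:ℝ) = 2 := by simp [ENNReal.ofReal_ofNat]
  have hconj : Real.HolderConjugate 2 2 := Real.HolderConjugate.two_two
  have hf' : MemLp f (ENNReal.ofReal 2) volume := by rw [h2]; exact hf
  have hg' : MemLp g (ENNReal.ofReal 2) volume := by rw [h2]; exact hg
  have hcs := integral_mul_norm_le_Lp_mul_Lq (μ := volume) hconj hf' hg'
  have e1 : ∀ h : ℝ → ℝ, (∫ x : ℝ, ‖h x‖ ^ (2:ℝ)) = ∫ x, h x ^ 2 := by
    intro h
    congr 1
    funext x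
    rw [show (2:ℝ) = ((2:ℕ):ℝ) by norm_num, Real.rpow_natCast, Real.norm_eq_abs, sq_abs]
  calc |∫ x, f x * g x| ≤ ∫ x, ‖f x * g x‖ := by
        rw [← Real.norm_eq_abs]; exact norm_integral_le_integral_norm _
    _ = ∫ x, ‖f x‖ * ‖g x‖ := by simp [norm_mul]
    _ ≤ (∫ x, ‖f x‖ ^ (2:ℝ)) ^ ((1:ℝ)/2) * (∫ x, ‖g x‖ ^ (2:ℝ)) ^ ((1:ℝ)/2) := by
        simpa using hcs
    _ = Real.sqrt (∫ x, f x ^ 2) * Real.sqrt (∫ x, g x ^ 2) := by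
        rw [e1, e1, ← Real.sqrt_eq_rpow, ← Real.sqrt_eq_rpow]

lemma Kk_symm (κ s x y : ℝ) : Kk κ s x y = Kk κ s y x := by
  unfold Kk; ring_nf

lemma integral_Kk_mul_Kk_left {κ s u : ℝ} (hκ : 0 < κ) (hs : s ^ 2 < 1) (hu : u ^ 2 < 1)
    (y z : ℝ) : ∫ x : ℝ, Kk κ s x y * Kk κ u x z = Kk κ (s * u) y z := by
  simp_rw [fun x => Kk_symm κ s x y]
  exact integral_Kk_mul_Kk hκ hs hu y z

lemma integral_Kk_sq {κ s : ℝ} (hκ : 0 < κ) (hs : s ^ 2 < 1) (x : ℝ) :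
    ∫ y : ℝ, Kk κ s x y ^ 2 = Kk κ (s * s) x x := by
  have h : ∀ y, Kk κ s x y ^ 2 = Kk κ s x y * Kk κ s y x := by
    intro y; rw [sq]; congr 1; exact Kk_symm κ s x y
  simp_rw [h]
  exact integral_Kk_mul_Kk hκ hs hs x x

lemma Kk_diag_eq {κ u : ℝ} (hκ : 0 < κ) (hu : u ^ 2 < 1) (x : ℝ) :
    Kk κ u x x = Real.sqrt (κ / (Real.pi * (1 - u ^ 2)))
      * Real.exp (-(κ * (1 - u) / (1 + u)) * x ^ 2) := by
  have h2 : (0:ℝ) < 1 - u ^ 2 := by linarith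
  have hul : (-1:ℝ) < u := by nlinarith
  have hu1 : (1:ℝ) + u ≠ 0 := by linarith
  have hu2 : (1:ℝ) - u ≠ 0 := by nlinarith
  unfold Kk
  congr 2
  have h12 : (1:ℝ) - u ^ 2 = (1 - u) * (1 + u) := by ring
  rw [h12]
  field_simp
  ring

lemma integrable_Kk_diag {κ u : ℝ} (hκ : 0 < κ) (hu : u ^ 2 < 1) :
    Integrable (fun x : ℝ => Kk κ u x x) := by
  have h2 : (0:ℝ) < 1 - u ^ 2 := by linarith
  have hul : (-1:ℝ) < u := by nlinarith
  have hur : u < 1 := by nlinarith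
  have ha : (0:ℝ) < κ * (1 - u) / (1 + u) := by
    apply div_pos
    · nlinarith
    · linarith
  simp_rw [Kk_diag_eq hκ hu]
  exact (integrable_exp_neg_mul_sq ha).const_mul _

section Qsec
variable {κ s u : ℝ} {φ : ℝ → ℝ}

lemma aesm_Q (κ s : ℝ) (hφ : MemLp φ 2 (volume : Measure ℝ)) :
    AEStronglyMeasurable (fun x => ∫ y : ℝ, Kk κ s x y * φ y) volume :=
  AEStronglyMeasurable.integral_prod_right' (f := fun p : ℝ × ℝ => Kk κ s p.1 p.2 * φ p.2)
    (((continuous_Kk κ s).aestronglyMeasurable).mul hφ.1.comp_snd)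

lemma Q_abs_le (hκ : 0 < κ) (hs : s ^ 2 < 1) (hφ : MemLp φ 2 (volume : Measure ℝ)) (x : ℝ) :
    |∫ y : ℝ, Kk κ s x y * φ y|
      ≤ Real.sqrt (Kk κ (s * s) x x) * Real.sqrt (∫ y : ℝ, φ y ^ 2) := by
  have h := abs_integral_mul_le (memLp_Kk_right hκ hs x) hφ
  rwa [integral_Kk_sq hκ hs x] at h

lemma ss_sq_lt_one {s : ℝ} (hs : s ^ 2 < 1) : (s * s) ^ 2 < 1 := by nlinarith [sq_nonneg s]

lemma sqrt_Kk_diag_le (hκ : 0 < κ) (hu : u ^ 2 < 1) (x : ℝ) :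
    Real.sqrt (Kk κ u x x)
      ≤ Real.sqrt (Real.sqrt (κ / (Real.pi * (1 - u ^ 2))))
        * Real.exp (-lam κ u * x ^ 2) := by
  have h := Real.sqrt_le_sqrt (Kk_le hκ hu x x)
  rwa [Real.sqrt_mul (Real.sqrt_nonneg _), Real.sqrt_mul_self (Real.exp_nonneg _)] at h

lemma Q_bound (hκ : 0 < κ) (hs : s ^ 2 < 1) (hφ : MemLp φ 2 (volume : Measure ℝ)) (x : ℝ) :
    |∫ y : ℝ, Kk κ s x y * φ y|
      ≤ (Real.sqrt (Real.sqrt (κ / (Real.pi * (1 - (s * s) ^ 2))))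
          * Real.sqrt (∫ y : ℝ, φ y ^ 2)) * Real.exp (-lam κ (s * s) * x ^ 2) := by
  refine le_trans (Q_abs_le hκ hs hφ x) (le_trans (mul_le_mul_of_nonneg_right
    (sqrt_Kk_diag_le hκ (ss_sq_lt_one hs) x) (Real.sqrt_nonneg _)) (le_of_eq (by ring)))

lemma memLp_Q (hκ : 0 < κ) (hs : s ^ 2 < 1) (hφ : MemLp φ 2 (volume : Measure ℝ)) :
    MemLp (fun x => ∫ y : ℝ, Kk κ s x y * φ y) 2 volume := by
  refine MemLp.of_le (memLp_gauss (Real.sqrt (Real.sqrt (κ / (Real.pi * (1 - (s * s) ^ 2))))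
      * Real.sqrt (∫ y : ℝ, φ y ^ 2)) (lam κ (s * s)) (lam_pos hκ (ss_sq_lt_one hs)))
    (aesm_Q κ s hφ) ?_
  filter_upwards with x
  calc ‖∫ y : ℝ, Kk κ s x y * φ y‖ = |∫ y : ℝ, Kk κ s x y * φ y| := Real.norm_eq_abs _
    _ ≤ (Real.sqrt (Real.sqrt (κ / (Real.pi * (1 - (s * s) ^ 2))))
          * Real.sqrt (∫ y : ℝ, φ y ^ 2)) * Real.exp (-lam κ (s * s) * x ^ 2) :=
        Q_bound hκ hs hφ x
    _ ≤ ‖(Real.sqrt (Real.sqrt (κ / (Real.pi * (1 - (s * s) ^ 2))))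
          * Real.sqrt (∫ y : ℝ, φ y ^ 2)) * Real.exp (-lam κ (s * s) * x ^ 2)‖ :=
        le_abs_self _

lemma inner_swap (hκ : 0 < κ) (hs : s ^ 2 < 1) (hφ : MemLp φ 2 (volume : Measure ℝ)) (y : ℝ) :
    ∫ x : ℝ, Kk κ s x y * (∫ z : ℝ, Kk κ s x z * φ z)
      = ∫ z : ℝ, Kk κ (s * s) y z * φ z := by
  have hlam := lam_pos hκ hs
  have hgmem : MemLp (fun z : ℝ => Real.exp (-lam κ s * z ^ 2)) 2 (volume : Measure ℝ) := by
    have := memLp_gauss 1 (lam κ s) hlam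
    simpa using this
  have int_g : Integrable (fun z : ℝ => Real.exp (-lam κ s * z ^ 2) * ‖φ z‖) :=
    integrable_mul_L2 hgmem hφ.norm
  have int_f : Integrable (fun x : ℝ =>
      (Real.sqrt (κ / (Real.pi * (1 - s ^ 2))) ^ 2 * Real.exp (-lam κ s * y ^ 2))
        * (Real.exp (-lam κ s * x ^ 2) * Real.exp (-lam κ s * x ^ 2))) := by
    have h : Integrable (fun x : ℝ =>
        (Real.sqrt (κ / (Real.pi * (1 - s ^ 2))) ^ 2 * Real.exp (-lam κ s * y ^ 2))
          * Real.exp (-(2 * lam κ s) * x ^ 2)) :=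
      (integrable_exp_neg_mul_sq (by linarith)).const_mul _
    apply h.congr
    filter_upwards with x
    rw [← Real.exp_add]
    congr 2
    ring
  have hint : Integrable (Function.uncurry fun x z : ℝ =>
      Kk κ s x y * (Kk κ s x z * φ z)) (volume.prod volume) := by
    refine Integrable.mono' (int_f.mul_prod int_g) ?_ ?_
    · exact (((continuous_Kk κ s).comp (continuous_id.prodMk continuous_const)).comp
        continuous_fst).aestronglyMeasurable.mul
        (((continuous_Kk κ s).aestronglyMeasurable).mul hφ.1.comp_snd)
    · filter_upwards with p
      have h1 := Kk_le hκ hs p.1 y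
      have h2 := Kk_le hκ hs p.1 p.2
      calc ‖Kk κ s p.1 y * (Kk κ s p.1 p.2 * φ p.2)‖
          = Kk κ s p.1 y * (Kk κ s p.1 p.2 * ‖φ p.2‖) := by
            rw [norm_mul, norm_mul, Real.norm_eq_abs (Kk κ s p.1 y),
              Real.norm_eq_abs (Kk κ s p.1 p.2), abs_of_nonneg (Kk_nonneg _ _ _ _),
              abs_of_nonneg (Kk_nonneg _ _ _ _)]
        _ ≤ (Real.sqrt (κ / (Real.pi * (1 - s ^ 2)))
              * (Real.exp (-lam κ s * p.1 ^ 2) * Real.exp (-lam κ s * y ^ 2)))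
            * ((Real.sqrt (κ / (Real.pi * (1 - s ^ 2)))
              * (Real.exp (-lam κ s * p.1 ^ 2) * Real.exp (-lam κ s * p.2 ^ 2))) * ‖φ p.2‖) :=
            mul_le_mul h1 (mul_le_mul_of_nonneg_right h2 (norm_nonneg _))
              (mul_nonneg (Kk_nonneg _ _ _ _) (norm_nonneg _)) (by positivity)
        _ = (Real.sqrt (κ / (Real.pi * (1 - s ^ 2))) ^ 2 * Real.exp (-lam κ s * y ^ 2))
              * (Real.exp (-lam κ s * p.1 ^ 2) * Real.exp (-lam κ s * p.1 ^ 2))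
            * (Real.exp (-lam κ s * p.2 ^ 2) * ‖φ p.2‖) := by ring
  calc ∫ x : ℝ, Kk κ s x y * ∫ z : ℝ, Kk κ s x z * φ z
      = ∫ x : ℝ, ∫ z : ℝ, Kk κ s x y * (Kk κ s x z * φ z) := by
        congr 1; funext x; rw [integral_const_mul]
    _ = ∫ z : ℝ, ∫ x : ℝ, Kk κ s x y * (Kk κ s x z * φ z) := integral_integral_swap hint
    _ = ∫ z : ℝ, Kk κ (s * s) y z * φ z := by
        congr 1; funext z
        simp_rw [← mul_assoc]
        rw [integral_mul_const, integral_Kk_mul_Kk_left hκ hs hs y z]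

lemma integral_Q_sq_eq (hκ : 0 < κ) (hs : s ^ 2 < 1) (hφ : MemLp φ 2 (volume : Measure ℝ)) :
    ∫ x : ℝ, (∫ y : ℝ, Kk κ s x y * φ y) ^ 2
      = ∫ y : ℝ, (∫ z : ℝ, Kk κ (s * s) y z * φ z) * φ y := by
  have hlam := lam_pos hκ hs
  have hlamss := lam_pos hκ (ss_sq_lt_one hs)
  have hgmem : MemLp (fun z : ℝ => Real.exp (-lam κ s * z ^ 2)) 2 (volume : Measure ℝ) := by
    have := memLp_gauss 1 (lam κ s) hlam
    simpa using this
  have int_g : Integrable (fun z : ℝ => Real.exp (-lam κ s * z ^ 2) * ‖φ z‖) :=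
    integrable_mul_L2 hgmem hφ.norm
  have int_f : Integrable (fun x : ℝ =>
      ((Real.sqrt (Real.sqrt (κ / (Real.pi * (1 - (s * s) ^ 2))))
          * Real.sqrt (∫ y : ℝ, φ y ^ 2)) * Real.sqrt (κ / (Real.pi * (1 - s ^ 2))))
        * (Real.exp (-lam κ (s * s) * x ^ 2) * Real.exp (-lam κ s * x ^ 2))) := by
    have h : Integrable (fun x : ℝ =>
        ((Real.sqrt (Real.sqrt (κ / (Real.pi * (1 - (s * s) ^ 2))))
            * Real.sqrt (∫ y : ℝ, φ y ^ 2)) * Real.sqrt (κ / (Real.pi * (1 - s ^ 2))))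
          * Real.exp (-(lam κ (s * s) + lam κ s) * x ^ 2)) :=
      (integrable_exp_neg_mul_sq (by linarith)).const_mul _
    apply h.congr
    filter_upwards with x
    rw [← Real.exp_add]
    congr 2
    ring
  have hint : Integrable (Function.uncurry fun x y : ℝ =>
      (∫ z : ℝ, Kk κ s x z * φ z) * (Kk κ s x y * φ y)) (volume.prod volume) := by
    refine Integrable.mono' (int_f.mul_prod int_g) ?_ ?_
    · exact ((aesm_Q κ s hφ).comp_fst).mul
        (((continuous_Kk κ s).aestronglyMeasurable).mul hφ.1.comp_snd)
    · filter_upwards with p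
      have h1 := Q_bound hκ hs hφ p.1
      have h2 := Kk_le hκ hs p.1 p.2
      calc ‖(∫ z : ℝ, Kk κ s p.1 z * φ z) * (Kk κ s p.1 p.2 * φ p.2)‖
          = |∫ z : ℝ, Kk κ s p.1 z * φ z| * (Kk κ s p.1 p.2 * ‖φ p.2‖) := by
            rw [norm_mul, norm_mul, Real.norm_eq_abs (∫ z : ℝ, Kk κ s p.1 z * φ z),
              Real.norm_eq_abs (Kk κ s p.1 p.2), abs_of_nonneg (Kk_nonneg _ _ _ _)]
        _ ≤ ((Real.sqrt (Real.sqrt (κ / (Real.pi * (1 - (s * s) ^ 2))))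
              * Real.sqrt (∫ y : ℝ, φ y ^ 2)) * Real.exp (-lam κ (s * s) * p.1 ^ 2))
            * ((Real.sqrt (κ / (Real.pi * (1 - s ^ 2)))
              * (Real.exp (-lam κ s * p.1 ^ 2) * Real.exp (-lam κ s * p.2 ^ 2))) * ‖φ p.2‖) :=
            mul_le_mul h1 (mul_le_mul_of_nonneg_right h2 (norm_nonneg _))
              (mul_nonneg (Kk_nonneg _ _ _ _) (norm_nonneg _)) (by positivity)
        _ = ((Real.sqrt (Real.sqrt (κ / (Real.pi * (1 - (s * s) ^ 2))))
              * Real.sqrt (∫ y : ℝ, φ y ^ 2)) * Real.sqrt (κ / (Real.pi * (1 - s ^ 2))))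
              * (Real.exp (-lam κ (s * s) * p.1 ^ 2) * Real.exp (-lam κ s * p.1 ^ 2))
            * (Real.exp (-lam κ s * p.2 ^ 2) * ‖φ p.2‖) := by ring
  calc ∫ x : ℝ, (∫ y : ℝ, Kk κ s x y * φ y) ^ 2
      = ∫ x : ℝ, ∫ y : ℝ, (∫ z : ℝ, Kk κ s x z * φ z) * (Kk κ s x y * φ y) := by
        congr 1; funext x
        rw [sq]
        exact (integral_const_mul _ _).symm
    _ = ∫ y : ℝ, ∫ x : ℝ, (∫ z : ℝ, Kk κ s x z * φ z) * (Kk κ s x y * φ y) :=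
        integral_integral_swap hint
    _ = ∫ y : ℝ, (∫ z : ℝ, Kk κ (s * s) y z * φ z) * φ y := by
        congr 1; funext y
        have hptw : ∀ x, (∫ z : ℝ, Kk κ s x z * φ z) * (Kk κ s x y * φ y)
            = Kk κ s x y * (∫ z : ℝ, Kk κ s x z * φ z) * φ y := fun x => by ring
        simp_rw [hptw]
        rw [integral_mul_const]
        congr 1
        simp_rw [mul_comm (Kk κ s _ y) _]
        simp_rw [mul_comm _ (Kk κ s _ y)]
        exact inner_swap hκ hs hφ y

lemma integral_Q_sq_le (hκ : 0 < κ) (hu : u ^ 2 < 1) (hφ : MemLp φ 2 (volume : Measure ℝ))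
    (horth : ∫ y : ℝ, psi κ y * φ y = 0) :
    ∫ y : ℝ, (∫ z : ℝ, Kk κ u y z * φ z) ^ 2
      ≤ (u ^ 2 / (1 - u ^ 2)) * ∫ y : ℝ, φ y ^ 2 := by
  have huu := ss_sq_lt_one hu
  have hNnn : (0:ℝ) ≤ ∫ y : ℝ, φ y ^ 2 := integral_nonneg fun y => sq_nonneg _
  have hdiag : ∀ y : ℝ, ∫ z : ℝ, (Kk κ u y z - psi κ y * psi κ z) ^ 2
      = Kk κ (u * u) y y - psi κ y ^ 2 := by
    intro y
    have e : ∀ z, (Kk κ u y z - psi κ y * psi κ z) ^ 2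
        = Kk κ u y z ^ 2 - 2 * psi κ y * (Kk κ u y z * psi κ z)
          + psi κ y ^ 2 * psi κ z ^ 2 := fun z => by ring
    have i1 : Integrable (fun z : ℝ => Kk κ u y z ^ 2) :=
      (memLp_Kk_right hκ hu y).integrable_sq
    have i2 : Integrable (fun z : ℝ => 2 * psi κ y * (Kk κ u y z * psi κ z)) :=
      (integrable_mul_L2 (memLp_Kk_right hκ hu y) (memLp_psi hκ)).const_mul _
    have i3 : Integrable (fun z : ℝ => psi κ y ^ 2 * psi κ z ^ 2) :=
      ((memLp_psi hκ).integrable_sq).const_mul _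
    have i12 : Integrable (fun z : ℝ =>
        Kk κ u y z ^ 2 - 2 * psi κ y * (Kk κ u y z * psi κ z)) volume := i1.sub i2
    simp_rw [e]
    rw [integral_add i12 i3, integral_sub i1 i2, integral_Kk_sq hκ hu y,
      integral_const_mul, integral_const_mul, integral_Kk_psi hκ hu y,
      integral_psi_sq hκ]
    ring
  have hptw : ∀ y : ℝ, (∫ z : ℝ, Kk κ u y z * φ z) ^ 2
      ≤ (Kk κ (u * u) y y - psi κ y ^ 2) * ∫ z : ℝ, φ z ^ 2 := by
    intro y
    have hmm : MemLp (fun z => Kk κ u y z - psi κ y * psi κ z) 2 (volume : Measure ℝ) :=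
      (memLp_Kk_right hκ hu y).sub ((memLp_psi hκ).const_mul _)
    have hQ : ∫ z : ℝ, Kk κ u y z * φ z
        = ∫ z : ℝ, (Kk κ u y z - psi κ y * psi κ z) * φ z := by
      have e : ∀ z, (Kk κ u y z - psi κ y * psi κ z) * φ z
          = Kk κ u y z * φ z - psi κ y * (psi κ z * φ z) := fun z => by ring
      simp_rw [e]
      rw [integral_sub (integrable_mul_L2 (memLp_Kk_right hκ hu y) hφ)
        ((integrable_mul_L2 (memLp_psi hκ) hφ).const_mul _), integral_const_mul, horth]
      simp
    have hcs := abs_integral_mul_le hmm hφ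
    rw [hdiag y] at hcs
    have hRnn : (0:ℝ) ≤ Kk κ (u * u) y y - psi κ y ^ 2 :=
      (hdiag y) ▸ integral_nonneg fun z => sq_nonneg _
    calc (∫ z : ℝ, Kk κ u y z * φ z) ^ 2
        = |∫ z : ℝ, (Kk κ u y z - psi κ y * psi κ z) * φ z| ^ 2 := by rw [← hQ, sq_abs]
      _ ≤ (Real.sqrt (Kk κ (u * u) y y - psi κ y ^ 2)
            * Real.sqrt (∫ z : ℝ, φ z ^ 2)) ^ 2 := by
          apply pow_le_pow_left₀ (abs_nonneg _) hcs
      _ = (Kk κ (u * u) y y - psi κ y ^ 2) * ∫ z : ℝ, φ z ^ 2 := by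
          rw [mul_pow, Real.sq_sqrt hRnn, Real.sq_sqrt hNnn]
  have hint1 : Integrable (fun y : ℝ => (∫ z : ℝ, Kk κ u y z * φ z) ^ 2) :=
    (memLp_Q hκ hu hφ).integrable_sq
  have hintK : Integrable (fun y : ℝ => Kk κ (u * u) y y - psi κ y ^ 2) :=
    (integrable_Kk_diag hκ huu).sub ((memLp_psi hκ).integrable_sq)
  have hint2 : Integrable
      (fun y : ℝ => (Kk κ (u * u) y y - psi κ y ^ 2) * ∫ z : ℝ, φ z ^ 2) :=
    hintK.mul_const _
  calc ∫ y : ℝ, (∫ z : ℝ, Kk κ u y z * φ z) ^ 2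
      ≤ ∫ y : ℝ, (Kk κ (u * u) y y - psi κ y ^ 2) * ∫ z : ℝ, φ z ^ 2 :=
        integral_mono hint1 hint2 hptw
    _ = (∫ y : ℝ, (Kk κ (u * u) y y - psi κ y ^ 2)) * ∫ z : ℝ, φ z ^ 2 :=
        integral_mul_const _ _
    _ = (1 / (1 - u * u) - 1) * ∫ z : ℝ, φ z ^ 2 := by
        rw [integral_sub (integrable_Kk_diag hκ huu) ((memLp_psi hκ).integrable_sq),
          integral_Kk_diag hκ huu, integral_psi_sq hκ]
    _ = (u ^ 2 / (1 - u ^ 2)) * ∫ y : ℝ, φ y ^ 2 := by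
        congr 1
        have h2 : (1:ℝ) - u ^ 2 ≠ 0 := by intro h; nlinarith
        have h2' : (1:ℝ) - u * u ≠ 0 := by intro h; apply h2; nlinarith
        field_simp
        ring

end Qsec

/-- `ψ_κ` is a fixed point of `P̂_∞`, and `P̂_∞` is a contraction on the
orthogonal complement of `ψ_κ` in `L²(ℝ)`. -/
theorem stmt_9 (α : ℝ) (hα : α ∈ Set.Ioo (-1 : ℝ) 1) (κ : ℝ)
    (hκ : κ = Real.sqrt (1 - α ^ 2)) :
    (∀ x : ℝ, Phat α (psi κ) x = psi κ x) ∧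
    ∃ μ : ℝ, μ < 1 ∧
      ∀ φ : ℝ → ℝ, MeasureTheory.MemLp φ 2 MeasureTheory.volume →
        (∫ y : ℝ, psi κ y * φ y) = 0 →
        MeasureTheory.eLpNorm (Phat α φ) 2 MeasureTheory.volume ≤
          ENNReal.ofReal μ * MeasureTheory.eLpNorm φ 2 MeasureTheory.volume := by
  have hκpos := kappa_pos hα hκ
  have ht2 := t_sq_lt_one hα hκ
  constructor
  · intro x
    rw [Phat_eq_Q hα hκ (psi κ) x]
    exact integral_Kk_psi hκpos ht2 x
  · obtain ⟨t, htdef⟩ : ∃ t : ℝ, t = -α / (1 + κ) := ⟨_, rfl⟩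
    have ht2' : t ^ 2 < 1 := by rw [htdef]; exact ht2
    have ht0 : (0:ℝ) ≤ t ^ 2 := sq_nonneg t
    obtain ⟨n, hn⟩ := exists_pow_lt_of_lt_one
      (show (0:ℝ) < (1 - t ^ 2) / 2 by linarith) ht2'
    refine ⟨Real.sqrt (1 - (1/2 : ℝ) ^ (n + 1)), ?_, ?_⟩
    · have h1 : (0:ℝ) < (1/2 : ℝ) ^ (n + 1) := by positivity
      have h2 : (1/2:ℝ) ^ (n+1) ≤ 1 := pow_le_one₀ (by norm_num) (by norm_num)
      calc Real.sqrt (1 - (1/2:ℝ) ^ (n+1)) < Real.sqrt 1 :=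
            Real.sqrt_lt_sqrt (by linarith) (by linarith)
        _ = 1 := Real.sqrt_one
    · intro φ hφ horth
      have hN : (0:ℝ) ≤ ∫ y : ℝ, φ y ^ 2 := integral_nonneg fun y => sq_nonneg _
      have hexp2 : ∀ j : ℕ, (t ^ (2 ^ j)) ^ 2 = (t ^ 2) ^ (2 ^ j) := by
        intro j
        rw [← pow_mul, ← pow_mul, mul_comm]
      have hsj : ∀ j : ℕ, (t ^ (2 ^ j)) ^ 2 < 1 := by
        intro j
        rw [hexp2 j]
        exact pow_lt_one₀ ht0 ht2' (by positivity)
      set a : ℕ → ℝ := fun j => ∫ x : ℝ, (∫ y : ℝ, Kk κ (t ^ 2 ^ j) x y * φ y) ^ 2 with ha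
      have haj : ∀ j, a j = ∫ x : ℝ, (∫ y : ℝ, Kk κ (t ^ 2 ^ j) x y * φ y) ^ 2 :=
        fun j => rfl
      have ha_nonneg : ∀ j, 0 ≤ a j := fun j => integral_nonneg fun x => sq_nonneg _
      have hstep : ∀ j : ℕ, a j ≤ (a (j+1) + ∫ y : ℝ, φ y ^ 2) / 2 := by
        intro j
        have hkey : a j = ∫ y : ℝ, (∫ z : ℝ, Kk κ (t ^ 2 ^ (j+1)) y z * φ z) * φ y := by
          rw [haj]
          have h := integral_Q_sq_eq hκpos (hsj j) hφ
          rw [show t ^ 2^j * t ^ 2^j = t ^ 2^(j+1) by rw [← pow_add]; congr 1; omega] at h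
          exact h
        have hCS := abs_integral_mul_le (memLp_Q hκpos (hsj (j+1)) hφ) hφ
        have h1 : a j ≤ Real.sqrt (a (j+1)) * Real.sqrt (∫ y : ℝ, φ y ^ 2) := by
          rw [hkey, haj (j+1)]
          exact le_trans (le_abs_self _) hCS
        have h2 : Real.sqrt (a (j+1)) * Real.sqrt (∫ y : ℝ, φ y ^ 2)
            ≤ (a (j+1) + ∫ y : ℝ, φ y ^ 2) / 2 := by
          rw [← Real.sqrt_mul (ha_nonneg (j+1))]
          have hb : a (j+1) * ∫ y : ℝ, φ y ^ 2
              ≤ ((a (j+1) + ∫ y : ℝ, φ y ^ 2) / 2) ^ 2 := by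
            nlinarith [ha_nonneg (j+1), hN, sq_nonneg (a (j+1) - ∫ y : ℝ, φ y ^ 2)]
          calc Real.sqrt (a (j+1) * ∫ y : ℝ, φ y ^ 2)
              ≤ Real.sqrt (((a (j+1) + ∫ y : ℝ, φ y ^ 2) / 2) ^ 2) := Real.sqrt_le_sqrt hb
            _ = (a (j+1) + ∫ y : ℝ, φ y ^ 2) / 2 := Real.sqrt_sq (by linarith [ha_nonneg (j+1)])
        exact h1.trans h2
      have hbase : a n ≤ (1/2) * ∫ y : ℝ, φ y ^ 2 := by
        have hb := integral_Q_sq_le hκpos (hsj n) hφ horth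
        have hw : (t ^ 2^n) ^ 2 ≤ (t^2) ^ n := by
          rw [hexp2 n]
          exact pow_le_pow_of_le_one ht0 ht2'.le (Nat.le_of_lt (Nat.lt_two_pow_self))
        have hwt : (t ^ 2^n) ^ 2 ≤ t ^ 2 := by
          rw [hexp2 n]
          calc (t^2) ^ (2^n) ≤ (t^2) ^ 1 :=
                pow_le_pow_of_le_one ht0 ht2'.le Nat.one_le_two_pow
            _ = t ^ 2 := pow_one _
        have hcoef : (t ^ 2^n) ^ 2 / (1 - (t ^ 2^n) ^ 2) ≤ 1/2 := by
          have hnum : (t ^ 2^n) ^ 2 < (1 - t^2)/2 := lt_of_le_of_lt hw hn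
          calc (t ^ 2^n) ^ 2 / (1 - (t ^ 2^n) ^ 2)
              ≤ ((1 - t^2)/2) / (1 - t^2) :=
                div_le_div₀ (by linarith) hnum.le (by linarith) (by linarith)
            _ = 1/2 := by
                have hne : (1:ℝ) - t ^ 2 ≠ 0 := by linarith
                field_simp
        calc a n ≤ ((t ^ 2^n) ^ 2 / (1 - (t ^ 2^n) ^ 2)) * ∫ y : ℝ, φ y ^ 2 := by
              rw [haj n]; exact hb
          _ ≤ (1/2) * ∫ y : ℝ, φ y ^ 2 := mul_le_mul_of_nonneg_right hcoef hN
      have hdesc : ∀ i : ℕ, i ≤ n →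
          a (n - i) ≤ (1 - (1/2:ℝ) ^ (i+1)) * ∫ y : ℝ, φ y ^ 2 := by
        intro i
        induction i with
        | zero =>
          intro _
          have he : (1 - (1/2:ℝ) ^ (0+1)) = 1/2 := by norm_num
          rw [Nat.sub_zero, he]
          exact hbase
        | succ i ih =>
          intro hi
          have hii : i ≤ n := le_of_lt (Nat.lt_of_succ_le hi)
          have h1 := hstep (n - (i+1))
          have heq : n - (i+1) + 1 = n - i := by omega
          rw [heq] at h1
          have h2 := ih hii
          calc a (n - (i+1)) ≤ (a (n-i) + ∫ y : ℝ, φ y ^ 2) / 2 := h1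
            _ ≤ ((1 - (1/2:ℝ) ^ (i+1)) * (∫ y : ℝ, φ y ^ 2) + ∫ y : ℝ, φ y ^ 2) / 2 := by
                linarith
            _ = (1 - (1/2:ℝ) ^ (i+1+1)) * ∫ y : ℝ, φ y ^ 2 := by ring
      have hfinal : a 0 ≤ (1 - (1/2:ℝ) ^ (n+1)) * ∫ y : ℝ, φ y ^ 2 := by
        have h := hdesc n le_rfl
        rwa [Nat.sub_self] at h
      have hPhat : Phat α φ = fun x => ∫ y : ℝ, Kk κ t x y * φ y := by
        funext x
        rw [htdef]
        exact Phat_eq_Q hα hκ φ x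
      have hmem : MemLp (Phat α φ) 2 volume := by
        rw [hPhat]
        exact memLp_Q hκpos ht2' hφ
      have h00 : a 0 = ∫ x : ℝ, (Phat α φ x) ^ 2 := by
        rw [haj 0, hPhat]
        norm_num
      have ha0 : ∫ x : ℝ, (Phat α φ x) ^ 2 ≤ (1 - (1/2:ℝ) ^ (n+1)) * ∫ y : ℝ, φ y ^ 2 := by
        rw [← h00]; exact hfinal
      have hμnn : (0:ℝ) ≤ 1 - (1/2:ℝ) ^ (n+1) := by
        have : (1/2:ℝ) ^ (n+1) ≤ 1 := pow_le_one₀ (by norm_num) (by norm_num)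
        linarith
      rw [hmem.eLpNorm_eq_integral_rpow_norm two_ne_zero ENNReal.ofNat_ne_top,
        hφ.eLpNorm_eq_integral_rpow_norm two_ne_zero ENNReal.ofNat_ne_top,
        ← ENNReal.ofReal_mul (Real.sqrt_nonneg _)]
      apply ENNReal.ofReal_le_ofReal
      have e2 : (2:ℝ≥0∞).toReal = 2 := by simp
      rw [e2]
      have conv : ∀ f : ℝ → ℝ, (∫ x : ℝ, ‖f x‖ ^ (2:ℝ)) ^ ((2:ℝ))⁻¹
          = Real.sqrt (∫ x : ℝ, f x ^ 2) := by
        intro f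
        rw [Real.sqrt_eq_rpow]
        congr 1
        · congr 1
          funext x
          rw [show (2:ℝ) = ((2:ℕ):ℝ) by norm_num, Real.rpow_natCast, Real.norm_eq_abs, sq_abs]
        · norm_num
      rw [conv, conv]
      calc Real.sqrt (∫ x : ℝ, Phat α φ x ^ 2)
          ≤ Real.sqrt ((1 - (1/2:ℝ) ^ (n+1)) * ∫ y : ℝ, φ y ^ 2) := Real.sqrt_le_sqrt ha0
        _ = Real.sqrt (1 - (1/2:ℝ) ^ (n+1)) * Real.sqrt (∫ y : ℝ, φ y ^ 2) :=
            Real.sqrt_mul hμnn _
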